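/- Let X be a random vector in [0,1]^d and let x_1,...,x_n be i.i.d. copies of X. For any δ ∈ (0,1), with probability at least 1−δ, for every w ∈ ℝ_+^d with ‖w‖₁ ≤ k: E[⟨w,X⟩] ≤ 2·(1/n)∑_{i=1}^n ⟨w,x_i⟩ + 16k·ln(d/δ)/n. -/

import Mathlib

open MeasureTheory Real

lemma exp_neg_le_quad {x : ℝ} (hx : 0 ≤ x) : Real.exp (-x) ≤ 1 - x + x ^ 2 / 2 := by
  have h1 : 1 + x + x ^ 2 / 2 ≤ Real.exp x := Real.quadratic_le_exp_of_nonneg hx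
  have h2 : Real.exp (-x) * Real.exp x = 1 := by
    rw [← Real.exp_add]; simp
  nlinarith [Real.exp_pos x, Real.exp_pos (-x)]

section aux

variable {β : Type*} [MeasurableSpace β] (μ : Measure β) [IsProbabilityMeasure μ]
  {f : β → ℝ}

lemma int_f (hf : Measurable f) (hb : ∀ᵐ x ∂μ, f x ∈ Set.Icc (0:ℝ) 1) :
    Integrable f μ := by
  refine Integrable.mono' (integrable_const 1) hf.aestronglyMeasurable ?_
  filter_upwards [hb] with x hx
  rw [Real.norm_eq_abs, abs_le]; exact ⟨by linarith [hx.1], hx.2⟩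

lemma int_expneg (hf : Measurable f) (hb : ∀ᵐ x ∂μ, f x ∈ Set.Icc (0:ℝ) 1)
    {l : ℝ} (hl : 0 ≤ l) : Integrable (fun x => Real.exp (-l * f x)) μ := by
  refine Integrable.mono' (integrable_const 1) ?_ ?_
  · exact (Real.measurable_exp.comp (hf.const_mul (-l))).aestronglyMeasurable
  · filter_upwards [hb] with x hx
    rw [Real.norm_eq_abs, abs_of_pos (Real.exp_pos _), Real.exp_le_one_iff]
    nlinarith [hx.1]

lemma mgf_aux (hf : Measurable f) (hb : ∀ᵐ x ∂μ, f x ∈ Set.Icc (0:ℝ) 1)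
    {l : ℝ} (hl : 0 ≤ l) :
    ∫ x, Real.exp (-l * f x) ∂μ ≤ Real.exp ((∫ x, f x ∂μ) * (l ^ 2 / 2 - l)) := by
  set α := ∫ x, f x ∂μ with hα
  have hα0 : 0 ≤ α := integral_nonneg_of_ae (hb.mono fun x hx => hx.1)
  set c := 1 - Real.exp (-l) with hc
  have step1 : ∫ x, Real.exp (-l * f x) ∂μ ≤ ∫ x, (1 - f x * c) ∂μ := by
    refine integral_mono_ae (int_expneg μ hf hb hl)
      ((integrable_const 1).sub ((int_f μ hf hb).mul_const c)) ?_
    filter_upwards [hb] with x hx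
    have hcx := convexOn_exp.2 (Set.mem_univ (0:ℝ)) (Set.mem_univ (-l))
      (sub_nonneg.mpr hx.2) hx.1 (by ring : (1 - f x) + f x = 1)
    simp only [smul_eq_mul, mul_zero, zero_add, Real.exp_zero, mul_one] at hcx
    have : (1 - f x) * 0 + f x * (-l) = -l * f x := by ring
    calc Real.exp (-l * f x) = Real.exp ((1 - f x) * 0 + f x * (-l)) := by rw [this]
      _ ≤ (1 - f x) + f x * Real.exp (-l) := by
          simpa [mul_zero, zero_add, Real.exp_zero] using hcx
      _ = 1 - f x * c := by rw [hc]; ring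
  have step2 : ∫ x, (1 - f x * c) ∂μ = 1 - α * c := by
    rw [integral_sub (integrable_const 1) ((int_f μ hf hb).mul_const c),
      integral_mul_const, integral_const]
    simp [hα]
  have step3 : 1 - α * c ≤ Real.exp (-(α * c)) := by
    linarith [Real.add_one_le_exp (-(α * c))]
  have step4 : -(α * c) ≤ α * (l ^ 2 / 2 - l) := by
    have h := exp_neg_le_quad hl
    have : -c ≤ l ^ 2 / 2 - l := by rw [hc]; linarith
    nlinarith
  calc ∫ x, Real.exp (-l * f x) ∂μ ≤ 1 - α * c := step1.trans_eq step2
    _ ≤ Real.exp (-(α * c)) := step3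
    _ ≤ Real.exp (α * (l ^ 2 / 2 - l)) := Real.exp_le_exp.mpr step4



lemma coord_bound (n : ℕ) (hn : 0 < n) (μ : Measure β) [IsProbabilityMeasure μ]
    (hf : Measurable f)
    (hb : ∀ᵐ x ∂μ, f x ∈ Set.Icc (0:ℝ) 1) {t : ℝ} (ht : 0 ≤ t) :
    (Measure.pi fun _ : Fin n => μ)
      {s | ∑ i, f (s i) < n * (∫ x, f x ∂μ) / 2 - 8 * t} ≤
      ENNReal.ofReal (Real.exp (-t)) := by
  letI : MeasureSpace β := ⟨μ⟩
  have hvol : (Measure.pi fun _ : Fin n => μ) = (volume : Measure (Fin n → β)) := rfl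
  set α := ∫ x, f x ∂μ with hαdef
  have hα0 : 0 ≤ α := integral_nonneg_of_ae (hb.mono fun x hx => hx.1)
  by_cases hcase : (n : ℝ) * α / 2 - 8 * t ≤ 0
  · -- event is null
    have hae : ∀ᵐ s ∂(Measure.pi fun _ : Fin n => μ), ∀ i : Fin n, 0 ≤ f (s i) := by
      rw [MeasureTheory.ae_all_iff]
      intro i
      exact (Measure.tendsto_eval_ae_ae (μ := fun _ : Fin n => μ) (i := i)).eventually
        (hb.mono fun x hx => hx.1)
    have hnull : (Measure.pi fun _ : Fin n => μ)
        {s : Fin n → β | ¬ ∀ i : Fin n, 0 ≤ f (s i)} = 0 := by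
      rw [← ae_iff] at *; exact hae
    refine le_trans (le_trans (measure_mono ?_) hnull.le) (by simp)
    intro s hs hgood
    have h1 : 0 ≤ ∑ i, f (s i) := Finset.sum_nonneg fun i _ => hgood i
    have h2 : ∑ i, f (s i) < (n : ℝ) * α / 2 - 8 * t := hs
    linarith
  · push_neg at hcase
    have hna : 0 < (n : ℝ) * α := by
      nlinarith [ht]
    set u : ℝ := (n : ℝ) * α / 2 + 8 * t with hu
    have hupos : 0 < u := by positivity
    set l : ℝ := u / ((n : ℝ) * α) with hl
    have hlpos : 0 < l := div_pos hupos hna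
    have h1 : l * ((n : ℝ) * α) = u := div_mul_cancel₀ _ hna.ne'
    -- the exponential moment function
    set g : (Fin n → β) → ℝ := fun s => Real.exp (-l * ∑ i, f (s i)) with hg
    have hgprod : g = fun s => ∏ i, Real.exp (-l * f (s i)) := by
      funext s
      rw [hg]
      simp only [Finset.mul_sum, Real.exp_sum]
    have hIg : Integrable g (volume : Measure (Fin n → β)) := by
      rw [hgprod]
      exact Integrable.fintype_prod (f := fun _ : Fin n => fun x => Real.exp (-l * f x))
        (fun i => int_expneg μ hf hb hlpos.le)
    have hint : ∫ s, g s = (∫ x, Real.exp (-l * f x) ∂μ) ^ n := by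
      rw [hgprod]
      simpa [← hvol] using integral_fintype_prod_eq_pow (ι := Fin n) (μ := μ) (fun x => Real.exp (-l * f x))
    set ε : ℝ := Real.exp (l * (8 * t - (n : ℝ) * α / 2)) with hε
    have hεpos : 0 < ε := Real.exp_pos _
    have hmar := mul_meas_ge_le_integral_of_nonneg
      (μ := (volume : Measure (Fin n → β))) (f := g)
      (Filter.Eventually.of_forall fun s => (Real.exp_pos _).le) hIg ε
    have hsub : {s : Fin n → β | ∑ i, f (s i) < (n : ℝ) * α / 2 - 8 * t} ⊆
        {s | ε ≤ g s} := by
      intro s hs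
      have hs' : ∑ i, f (s i) < (n : ℝ) * α / 2 - 8 * t := hs
      show ε ≤ g s
      rw [hε, hg]
      apply Real.exp_le_exp.mpr
      nlinarith
    -- bound on integral of g
    have hmgf := mgf_aux μ hf hb hlpos.le
    have hintnn : 0 ≤ ∫ x, Real.exp (-l * f x) ∂μ :=
      integral_nonneg fun x => (Real.exp_pos _).le
    have hgle : ∫ s, g s ≤ Real.exp ((n : ℝ) * (α * (l ^ 2 / 2 - l))) := by
      rw [hint]
      calc (∫ x, Real.exp (-l * f x) ∂μ) ^ n
          ≤ (Real.exp (α * (l ^ 2 / 2 - l))) ^ n := pow_le_pow_left₀ hintnn hmgf n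
        _ = Real.exp ((n : ℝ) * (α * (l ^ 2 / 2 - l))) := (Real.exp_nat_mul _ n).symm
    -- numeric conclusion
    have h2 : 2 * t ≤ l * u := by
      rw [hl, div_mul_eq_mul_div, le_div_iff₀ hna, hu]
      nlinarith [ht, hna, mul_nonneg ht hna.le, sq_nonneg ((n : ℝ) * α)]
    have hexpo : (n : ℝ) * (α * (l ^ 2 / 2 - l)) - l * (8 * t - (n : ℝ) * α / 2) ≤ -t := by
      have h3 : (n : ℝ) * α * l ^ 2 = l * u := by
        rw [← h1]; ring
      have h4 : (n : ℝ) * (α * (l ^ 2 / 2 - l)) - l * (8 * t - (n : ℝ) * α / 2)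
          = -(l * u) / 2 := by linear_combination (1/2) * h3 + l * hu
      rw [h4]
      have h5 : 2 * t ≤ l * u := h2
      generalize l * u = X at h5 ⊢
      linarith
    have htot : ((Measure.pi fun _ : Fin n => μ)
        {s : Fin n → β | ∑ i, f (s i) < (n : ℝ) * α / 2 - 8 * t}).toReal ≤
        Real.exp (-t) := by
      have hm1 : ((Measure.pi fun _ : Fin n => μ)
          {s : Fin n → β | ∑ i, f (s i) < (n : ℝ) * α / 2 - 8 * t}).toReal ≤
          ((volume : Measure (Fin n → β)) {s | ε ≤ g s}).toReal := by
        rw [hvol]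
        exact ENNReal.toReal_mono (measure_ne_top _ _) (measure_mono hsub)
      have hm2 : ((volume : Measure (Fin n → β)) {s | ε ≤ g s}).toReal ≤
          Real.exp ((n : ℝ) * (α * (l ^ 2 / 2 - l))) / ε := by
        rw [le_div_iff₀ hεpos, mul_comm]
        exact hmar.trans hgle
      refine hm1.trans (hm2.trans ?_)
      rw [hε, ← Real.exp_sub]
      exact Real.exp_le_exp.mpr hexpo
    rw [← ENNReal.ofReal_toReal (measure_ne_top (Measure.pi fun _ : Fin n => μ) _)]
    exact ENNReal.ofReal_le_ofReal htot

theorem stmt6 (d n : ℕ) (hn : 0 < n) (k : ℝ) (hk : 0 ≤ k)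
    (μ : Measure (Fin d → ℝ)) [IsProbabilityMeasure μ]
    (hsupp : ∀ᵐ x ∂μ, ∀ l, x l ∈ Set.Icc (0 : ℝ) 1)
    (δ : ℝ) (hδ : δ ∈ Set.Ioo (0 : ℝ) 1) :
    ENNReal.ofReal (1 - δ) ≤ (Measure.pi fun _ : Fin n => μ)
      {s | ∀ w : Fin d → ℝ, (∀ l, 0 ≤ w l) → (∑ l, |w l|) ≤ k →
        ∫ x, (∑ l, w l * x l) ∂μ ≤
          2 * ((∑ i, ∑ l, w l * s i l) / n) + 16 * k * Real.log (d / δ) / n} := by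
  obtain ⟨hδ0, hδ1⟩ := hδ
  rcases Nat.eq_zero_or_pos d with hd | hd
  · subst hd
    refine le_trans (ENNReal.ofReal_le_one.mpr (by linarith)) ?_
    rw [← measure_univ (μ := Measure.pi fun _ : Fin n => μ)]
    apply measure_mono
    intro s _ w _ _
    simp
  · set t : ℝ := Real.log (d / δ) with htdef
    have ht : 0 ≤ t := Real.log_nonneg (by
      rw [le_div_iff₀ hδ0]
      have : (1 : ℝ) ≤ (d : ℝ) := by exact_mod_cast hd
      linarith)
    set α : Fin d → ℝ := fun j => ∫ x, x j ∂μ with hα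
    -- bad events
    set E : Fin d → Set (Fin n → Fin d → ℝ) :=
      fun j => {s | ∑ i, s i j < n * α j / 2 - 8 * t} with hE
    have hmE : ∀ j, MeasurableSet (E j) := by
      intro j
      exact measurableSet_lt (Finset.measurable_sum _ fun i _ =>
        (measurable_pi_apply j).comp (measurable_pi_apply i)) measurable_const
    have hEb : ∀ j, (Measure.pi fun _ : Fin n => μ) (E j) ≤
        ENNReal.ofReal (Real.exp (-t)) := fun j =>
      coord_bound n hn μ (measurable_pi_apply j) (hsupp.mono fun x hx => hx j) ht
    have hexp : Real.exp (-t) = δ / d := by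
      rw [htdef, ← Real.log_inv, Real.exp_log]
      · rw [inv_div]
      · have : (0 : ℝ) < (d : ℝ) := by exact_mod_cast hd
        positivity
    have hunion : (Measure.pi fun _ : Fin n => μ) (⋃ j, E j) ≤ ENNReal.ofReal δ := by
      refine le_trans (measure_iUnion_fintype_le _ _) ?_
      have hsum : ∑ j : Fin d, (Measure.pi fun _ : Fin n => μ) (E j) ≤
          ∑ j : Fin d, ENNReal.ofReal (Real.exp (-t)) :=
        Finset.sum_le_sum fun j _ => hEb j
      refine hsum.trans ?_
      rw [Finset.sum_const, Finset.card_univ, Fintype.card_fin, nsmul_eq_mul, hexp,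
        ← ENNReal.ofReal_natCast d, ← ENNReal.ofReal_mul (by positivity)]
      refine le_of_eq ?_
      congr 1
      field_simp
    -- good event implies the inequality for all w
    have hsub : (⋃ j, E j)ᶜ ⊆ {s : Fin n → Fin d → ℝ | ∀ w : Fin d → ℝ, (∀ l, 0 ≤ w l) →
        (∑ l, |w l|) ≤ k → ∫ x, (∑ l, w l * x l) ∂μ ≤
          2 * ((∑ i, ∑ l, w l * s i l) / n) + 16 * k * Real.log (d / δ) / n} := by
      intro s hs w hw hwk
      simp only [Set.mem_compl_iff, Set.mem_iUnion, not_exists] at hs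
      have hgood : ∀ j, n * α j / 2 - 8 * t ≤ ∑ i, s i j := by
        intro j
        have := hs j
        simpa [hE, not_lt] using this
      have hn' : (0 : ℝ) < n := by exact_mod_cast hn
      have hcoord : ∀ j, α j ≤ 2 * (∑ i, s i j) / n + 16 * t / n := by
        intro j
        have := hgood j
        rw [← add_div, le_div_iff₀ hn']
        linarith
      have hintf : ∀ j : Fin d, Integrable (fun x : Fin d → ℝ => x j) μ := by
        intro j
        refine Integrable.mono' (integrable_const 1)
          (measurable_pi_apply j).aestronglyMeasurable ?_
        filter_upwards [hsupp] with x hx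
        rw [Real.norm_eq_abs, abs_le]
        exact ⟨by linarith [(hx j).1], (hx j).2⟩
      have hint : ∫ x, (∑ l, w l * x l) ∂μ = ∑ l, w l * α l := by
        rw [integral_finset_sum _ fun l _ => (hintf l).const_mul (w l)]
        exact Finset.sum_congr rfl fun l _ => integral_const_mul (w l) _
      have hwsum : (∑ l, w l) ≤ k := by
        calc (∑ l, w l) = ∑ l, |w l| := Finset.sum_congr rfl fun l _ =>
              (abs_of_nonneg (hw l)).symm
          _ ≤ k := hwk
      have hws0 : 0 ≤ ∑ l, w l := Finset.sum_nonneg fun l _ => hw l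
      rw [hint, ← htdef]
      calc ∑ l, w l * α l
          ≤ ∑ l, w l * (2 * (∑ i, s i l) / n + 16 * t / n) :=
            Finset.sum_le_sum fun l _ => mul_le_mul_of_nonneg_left (hcoord l) (hw l)
        _ = ∑ l, (2 * (∑ i, w l * s i l) / n + w l * (16 * t / n)) :=
            Finset.sum_congr rfl fun l _ => by rw [← Finset.mul_sum]; ring
        _ = (∑ l, 2 * (∑ i, w l * s i l) / n) + ∑ l, w l * (16 * t / n) :=
            Finset.sum_add_distrib
        _ = 2 * ((∑ i, ∑ l, w l * s i l) / n) + (∑ l, w l) * (16 * t / n) := by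
            congr 1
            · rw [← Finset.sum_div, ← Finset.mul_sum, mul_div_assoc,
                Finset.sum_comm (f := fun l i => w l * s i l)]
            · rw [← Finset.sum_mul]
        _ ≤ 2 * ((∑ i, ∑ l, w l * s i l) / n) + 16 * k * t / n := by
            have : (∑ l, w l) * (16 * t / n) ≤ k * (16 * t / n) :=
              mul_le_mul_of_nonneg_right hwsum (by positivity)
            have heq : k * (16 * t / n) = 16 * k * t / n := by ring
            linarith [this, heq ▸ this]
    -- conclude
    calc ENNReal.ofReal (1 - δ)
        = 1 - ENNReal.ofReal δ := by
          rw [ENNReal.ofReal_sub 1 hδ0.le, ENNReal.ofReal_one]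
      _ ≤ 1 - (Measure.pi fun _ : Fin n => μ) (⋃ j, E j) := tsub_le_tsub_left hunion 1
      _ = (Measure.pi fun _ : Fin n => μ) (⋃ j, E j)ᶜ := by
          rw [measure_compl (MeasurableSet.iUnion hmE) (measure_ne_top _ _), measure_univ]
      _ ≤ _ := measure_mono hsub
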